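/- Let r be a rational number with 0 < r < 1, and let K(r) be the least natural number n with γⁿ(r) = 1 (which exists). Then K(r) equals the sum of the partial quotients a₁ + a₂ + ... + a_m in the (canonical) continued fraction expansion r = [0; a₁, a₂, ..., a_m], minus 1. In other words, the continued fraction expansion of r is obtained by recording the comparison exponents seen as one iteratively applies the slow Gauss map to r. -/

import Mathlib

/-- The slow Gauss map on the rationals, with the additional convention
`γ(1) = 1` used when iterating: for `r ≠ 1`, `γ(r) = 1/r - 1` if `r ≥ 1/2`,
and `γ(r) = r/(1-r)` if `r < 1/2`. -/
def slowGaussQ (r : ℚ) : ℚ :=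
  if r = 1 then 1 else if 1/2 ≤ r then 1/r - 1 else r / (1 - r)

/-- The value of the continued fraction `[0; a₁, ..., a_m]` where
`[a₁, ..., a_m]` is the given list of partial quotients. -/
def cfVal : List ℕ → ℚ
  | [] => 0
  | a :: l => 1 / ((a : ℚ) + cfVal l)

/-- Admissible lists: nonempty, positive entries, last entry `≥ 2` unless `L = [1]`. -/
def Adm : List ℕ → Prop
  | [] => False
  | [a] => a = 1 ∨ 2 ≤ a
  | a :: l => 0 < a ∧ Adm l ∧ l ≠ [1]

lemma Adm_pos : ∀ L : List ℕ, Adm L → ∀ a ∈ L, 0 < a := by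
  intro L
  induction L with
  | nil => intro h; exact h.elim
  | cons a l ih =>
    cases l with
    | nil =>
      intro h b hb
      simp only [List.mem_singleton] at hb
      subst hb
      rcases h with h | h <;> omega
    | cons c m =>
      intro h b hb
      rcases List.mem_cons.mp hb with hb | hb
      · subst hb; exact h.1
      · exact ih h.2.1 b hb

lemma cfVal_bounds : ∀ L : List ℕ, (∀ a ∈ L, 0 < a) →
    0 ≤ cfVal L ∧ cfVal L ≤ 1 ∧ (L ≠ [] → 0 < cfVal L) := by
  intro L
  induction L with
  | nil => simp [cfVal]
  | cons a l ih =>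
    intro h
    obtain ⟨h0, h1, _⟩ := ih (fun b hb => h b (List.mem_cons_of_mem _ hb))
    have ha : 1 ≤ (a : ℚ) := by exact_mod_cast h a (List.mem_cons_self)
    have hd : 0 < (a : ℚ) + cfVal l := by linarith
    simp only [cfVal]
    refine ⟨by positivity, ?_, fun _ => by positivity⟩
    rw [div_le_one hd]; linarith

lemma cfVal_eq_one : ∀ L : List ℕ, (∀ a ∈ L, 0 < a) → (cfVal L = 1 ↔ L = [1]) := by
  intro L h
  cases L with
  | nil => simp [cfVal]
  | cons a l =>
    obtain ⟨h0, h1, h2⟩ := cfVal_bounds l (fun b hb => h b (List.mem_cons_of_mem _ hb))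
    have ha : 1 ≤ (a : ℚ) := by exact_mod_cast h a (List.mem_cons_self)
    have hd : 0 < (a : ℚ) + cfVal l := by linarith
    simp only [cfVal]
    rw [div_eq_one_iff_eq hd.ne']
    constructor
    · intro he
      have hl : l = [] := by
        by_contra hne
        have := h2 hne
        linarith
      subst hl
      simp only [cfVal, add_zero] at he
      have : a = 1 := by exact_mod_cast he.symm
      rw [this]
    · intro he
      have : a = 1 ∧ l = [] := by
        constructor
        · exact (List.cons_eq_cons.mp he).1
        · exact (List.cons_eq_cons.mp he).2
      obtain ⟨ha1, hl⟩ := this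
      subst ha1; subst hl
      simp [cfVal]

/-- One reduction step on the list of partial quotients. -/
def reduce : List ℕ → List ℕ
  | [] => []
  | a :: l => if a ≤ 1 then l else (a - 1) :: l

lemma gauss_of_inv (y : ℚ) (hy : 2 ≤ y) : slowGaussQ (1 / y) = 1 / (y - 1) := by
  have hy0 : (0 : ℚ) < y := by linarith
  have hne1 : (1 : ℚ) / y ≠ 1 := by
    have : (1 : ℚ) / y < 1 := by rw [div_lt_one hy0]; linarith
    exact this.ne
  rw [slowGaussQ, if_neg hne1]
  by_cases hle : (1 : ℚ) / 2 ≤ 1 / y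
  · have : y ≤ 2 := by
      rw [div_le_div_iff₀ (by norm_num) hy0] at hle; linarith
    have hy2 : y = 2 := le_antisymm this hy
    subst hy2
    norm_num
  · rw [if_neg hle]
    have h1y : (1 : ℚ) - 1 / y ≠ 0 := by
      rw [sub_ne_zero]
      intro h
      rw [eq_comm, div_eq_one_iff_eq hy0.ne'] at h
      linarith
    field_simp

lemma gauss_of_inv2 (y : ℚ) (h1 : 1 < y) (h2 : y < 2) : slowGaussQ (1 / y) = y - 1 := by
  have hy0 : (0 : ℚ) < y := by linarith
  have hne1 : (1 : ℚ) / y ≠ 1 := by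
    have : (1 : ℚ) / y < 1 := by rw [div_lt_one hy0]; linarith
    exact this.ne
  have hle : (1 : ℚ) / 2 ≤ 1 / y := by
    rw [div_le_div_iff₀ (by norm_num) hy0]; linarith
  rw [slowGaussQ, if_neg hne1, if_pos hle, one_div_one_div]

lemma step_lemma (L : List ℕ) (hA : Adm L) (hne : L ≠ [1]) :
    slowGaussQ (cfVal L) = cfVal (reduce L) ∧ Adm (reduce L) ∧
      (reduce L).sum + 1 = L.sum := by
  cases L with
  | nil => exact hA.elim
  | cons a l =>
    cases l with
    | nil =>
      -- L = [a], a ≥ 2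
      have ha : 2 ≤ a := by
        rcases hA with h | h
        · exact absurd (by rw [h]) hne
        · exact h
      have ha1 : (1 : ℚ) ≤ (a : ℚ) - 1 := by
        have : (2 : ℚ) ≤ (a : ℚ) := by exact_mod_cast ha
        linarith
      have hred : reduce [a] = [a - 1] := by
        simp only [reduce, if_neg (by omega : ¬ a ≤ 1)]
      refine ⟨?_, ?_, ?_⟩
      · rw [hred]
        simp only [cfVal, add_zero]
        rw [gauss_of_inv (a : ℚ) (by exact_mod_cast ha)]
        congr 1
        push_cast [Nat.cast_sub (by omega : 1 ≤ a)]
        ring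
      · rw [hred]
        simp only [Adm]
        omega
      · rw [hred]; simp; omega
    | cons c m =>
      obtain ⟨hapos, hAl, hlne⟩ := hA
      have hlpos := Adm_pos (c :: m) hAl
      obtain ⟨hx0, hx1, hx2⟩ := cfVal_bounds (c :: m) hlpos
      have hxpos : 0 < cfVal (c :: m) := hx2 (by simp)
      have hxlt : cfVal (c :: m) < 1 := by
        rcases lt_or_eq_of_le hx1 with h | h
        · exact h
        · exact absurd ((cfVal_eq_one (c :: m) hlpos).mp h) hlne
      by_cases ha1 : a = 1
      · -- a = 1 : reduce = l
        subst ha1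
        have hred : reduce (1 :: c :: m) = c :: m := by simp [reduce]
        refine ⟨?_, by rw [hred]; exact hAl, by rw [hred]; simp only [List.sum_cons]; omega⟩
        rw [hred, show cfVal (1 :: c :: m) = 1 / ((1 : ℚ) + cfVal (c :: m)) by
          simp [cfVal]]
        rw [gauss_of_inv2 (1 + cfVal (c :: m)) (by linarith) (by linarith)]
        ring
      · -- a ≥ 2
        have ha : 2 ≤ a := by omega
        have haQ : (2 : ℚ) ≤ (a : ℚ) := by exact_mod_cast ha
        have hred : reduce (a :: c :: m) = (a - 1) :: c :: m := by
          simp only [reduce, if_neg (by omega : ¬ a ≤ 1)]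
        refine ⟨?_, ?_, ?_⟩
        · rw [hred, show cfVal (a :: c :: m) = 1 / ((a : ℚ) + cfVal (c :: m)) from rfl,
            show cfVal ((a - 1) :: c :: m) = 1 / (((a - 1 : ℕ) : ℚ) + cfVal (c :: m)) from rfl]
          rw [gauss_of_inv ((a : ℚ) + cfVal (c :: m)) (by linarith)]
          congr 1
          push_cast [Nat.cast_sub (by omega : 1 ≤ a)]
          ring
        · rw [hred]
          exact ⟨by omega, hAl, hlne⟩
        · rw [hred]; simp only [List.sum_cons]; omega

lemma Adm_sum_pos (L : List ℕ) (hA : Adm L) : 1 ≤ L.sum := by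
  cases L with
  | nil => exact hA.elim
  | cons a l =>
    have := Adm_pos _ hA a (List.mem_cons_self)
    simp only [List.sum_cons]
    omega

lemma iter_reaches_one : ∀ n : ℕ, ∀ L : List ℕ, Adm L → L.sum ≤ n →
    slowGaussQ^[L.sum - 1] (cfVal L) = 1 := by
  intro n
  induction n with
  | zero => intro L hA hs; have := Adm_sum_pos L hA; omega
  | succ n ih =>
    intro L hA hs
    by_cases h1 : L = [1]
    · subst h1; simp [cfVal]
    · obtain ⟨hg, hA', hsum⟩ := step_lemma L hA h1
      have h1' : 1 ≤ (reduce L).sum := Adm_sum_pos _ hA'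
      have : L.sum - 1 = ((reduce L).sum - 1) + 1 := by omega
      rw [this, Function.iterate_succ_apply, hg]
      exact ih (reduce L) hA' (by omega)

lemma iter_not_one : ∀ n : ℕ, ∀ L : List ℕ, ∀ m : ℕ, Adm L → L.sum ≤ n →
    m < L.sum - 1 → slowGaussQ^[m] (cfVal L) ≠ 1 := by
  intro n
  induction n with
  | zero => intro L m hA hs; have := Adm_sum_pos L hA; omega
  | succ n ih =>
    intro L m hA hs hm
    by_cases h1 : L = [1]
    · subst h1; simp at hm
    · obtain ⟨hg, hA', hsum⟩ := step_lemma L hA h1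
      cases m with
      | zero =>
        simp only [Function.iterate_zero, id]
        intro hc
        exact h1 ((cfVal_eq_one L (Adm_pos L hA)).mp hc)
      | succ m =>
        rw [Function.iterate_succ_apply, hg]
        exact ih (reduce L) m hA' (by omega) (by omega)

lemma Adm_of_last (L : List ℕ) (hL : L ≠ []) (hpos : ∀ a ∈ L, 0 < a)
    (hlast : 2 ≤ L.getLast hL) : Adm L := by
  induction L with
  | nil => exact absurd rfl hL
  | cons a l ih =>
    cases l with
    | nil =>
      simp only [List.getLast_singleton] at hlast
      exact Or.inr hlast
    | cons c m =>
      have hln : (c :: m : List ℕ) ≠ [] := by simp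
      have hlast' : 2 ≤ (c :: m).getLast hln := by
        rwa [List.getLast_cons hln] at hlast
      refine ⟨hpos a (List.mem_cons_self), ih hln (fun b hb => hpos b (List.mem_cons_of_mem _ hb)) hlast', ?_⟩
      intro hc
      injection hc with hc1 hc2
      subst hc1; subst hc2
      simp at hlast'

theorem stmt7 (r : ℚ) (h0 : 0 < r) (h1 : r < 1)
    (L : List ℕ) (hL : L ≠ []) (hpos : ∀ a ∈ L, 0 < a)
    (hlast : 2 ≤ L.getLast hL) (hval : cfVal L = r) :
    sInf {n : ℕ | slowGaussQ^[n] r = 1} = L.sum - 1 := by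
  have hA : Adm L := Adm_of_last L hL hpos hlast
  subst hval
  have hmem : L.sum - 1 ∈ {n : ℕ | slowGaussQ^[n] (cfVal L) = 1} :=
    iter_reaches_one L.sum L hA le_rfl
  have hne : {n : ℕ | slowGaussQ^[n] (cfVal L) = 1}.Nonempty := ⟨_, hmem⟩
  refine le_antisymm (Nat.sInf_le hmem) ?_
  by_contra hlt
  push_neg at hlt
  exact iter_not_one L.sum L _ hA le_rfl hlt (Nat.sInf_mem hne)
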